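/- Let H₁, H₂ be real Hilbert spaces and H = H₁ × H₂. Let Λ₁ : H₁ → E and Λ₂ : H₂ → E be bounded linear operators into a Hilbert space E, let μ₁, μ₂, α₁, α₂, ρ₀ > 0, and define K : H → H by K(h₁,h₂) = (μ₁ρ₀²h₁ + α₁Λ₁*(Λ₁h₁ + Λ₂h₂), μ₂ρ₀²h₂ + α₂Λ₂*(Λ₁h₁ + Λ₂h₂)). If μ₁ > α₂‖Λ₁‖²/(4ρ₀²) and μ₂ > α₁‖Λ₂‖²/(4ρ₀²), then (K h, h)_H ≥ τ‖h‖²_H for all h ∈ H, where τ = min over i=1,2 of (μᵢρ₀² − (α_{3−i}/4)‖Λᵢ‖²) > 0. -/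

import Mathlib

private lemma key_est (a uu vv w x : ℝ) (ha : 0 ≤ a) (huu : 0 ≤ uu) (hvv : 0 ≤ vv)
    (hw : vv ≤ w) (hx : -(uu * vv) ≤ x) : -(a * w ^ 2 / 4) ≤ a * (uu ^ 2 + x) := by
  have h1 : -(vv ^ 2 / 4) ≤ uu ^ 2 + x := by nlinarith [sq_nonneg (2 * uu - vv)]
  have h2 : vv ^ 2 ≤ w ^ 2 := by nlinarith
  nlinarith

/-- Coercivity of the Nash-equilibrium operator `K` on the product Hilbert space
`H = H₁ × H₂` (with the product inner product, written componentwise). -/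
theorem stmt_1 {H₁ H₂ E : Type*}
    [NormedAddCommGroup H₁] [InnerProductSpace ℝ H₁] [CompleteSpace H₁]
    [NormedAddCommGroup H₂] [InnerProductSpace ℝ H₂] [CompleteSpace H₂]
    [NormedAddCommGroup E] [InnerProductSpace ℝ E] [CompleteSpace E]
    (Λ₁ : H₁ →L[ℝ] E) (Λ₂ : H₂ →L[ℝ] E)
    (μ₁ μ₂ α₁ α₂ ρ₀ : ℝ)
    (hμ₁0 : 0 < μ₁) (hμ₂0 : 0 < μ₂) (hα₁ : 0 < α₁) (hα₂ : 0 < α₂) (hρ₀ : 0 < ρ₀)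
    (hμ₁ : α₂ * ‖Λ₁‖ ^ 2 / (4 * ρ₀ ^ 2) < μ₁)
    (hμ₂ : α₁ * ‖Λ₂‖ ^ 2 / (4 * ρ₀ ^ 2) < μ₂) :
    (0 < min (μ₁ * ρ₀ ^ 2 - α₂ / 4 * ‖Λ₁‖ ^ 2) (μ₂ * ρ₀ ^ 2 - α₁ / 4 * ‖Λ₂‖ ^ 2)) ∧
    ∀ h₁ : H₁, ∀ h₂ : H₂,
      min (μ₁ * ρ₀ ^ 2 - α₂ / 4 * ‖Λ₁‖ ^ 2) (μ₂ * ρ₀ ^ 2 - α₁ / 4 * ‖Λ₂‖ ^ 2)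
          * (‖h₁‖ ^ 2 + ‖h₂‖ ^ 2)
        ≤ (inner ℝ ((μ₁ * ρ₀ ^ 2) • h₁
              + α₁ • (ContinuousLinearMap.adjoint Λ₁) (Λ₁ h₁ + Λ₂ h₂)) h₁ : ℝ)
          + (inner ℝ ((μ₂ * ρ₀ ^ 2) • h₂
              + α₂ • (ContinuousLinearMap.adjoint Λ₂) (Λ₁ h₁ + Λ₂ h₂)) h₂ : ℝ) := by

  have h4ρ : (0:ℝ) < 4 * ρ₀ ^ 2 := by positivity
  have k₁ : α₂ * ‖Λ₁‖ ^ 2 < μ₁ * (4 * ρ₀ ^ 2) := (div_lt_iff₀ h4ρ).mp hμ₁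
  have k₂ : α₁ * ‖Λ₂‖ ^ 2 < μ₂ * (4 * ρ₀ ^ 2) := (div_lt_iff₀ h4ρ).mp hμ₂
  have hτ : 0 < min (μ₁ * ρ₀ ^ 2 - α₂ / 4 * ‖Λ₁‖ ^ 2) (μ₂ * ρ₀ ^ 2 - α₁ / 4 * ‖Λ₂‖ ^ 2) :=
    lt_min (by nlinarith) (by nlinarith)
  refine ⟨hτ, fun h₁ h₂ => ?_⟩
  set u := Λ₁ h₁ with hu
  set v := Λ₂ h₂ with hv
  have e1 : (inner ℝ ((μ₁ * ρ₀ ^ 2) • h₁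
        + α₁ • (ContinuousLinearMap.adjoint Λ₁) (u + v)) h₁ : ℝ)
      = μ₁ * ρ₀ ^ 2 * ‖h₁‖ ^ 2 + α₁ * (inner ℝ (u + v) u : ℝ) := by
    rw [inner_add_left, real_inner_smul_left, real_inner_smul_left,
      ContinuousLinearMap.adjoint_inner_left, real_inner_self_eq_norm_sq, ← hu]
  have e2 : (inner ℝ ((μ₂ * ρ₀ ^ 2) • h₂
        + α₂ • (ContinuousLinearMap.adjoint Λ₂) (u + v)) h₂ : ℝ)
      = μ₂ * ρ₀ ^ 2 * ‖h₂‖ ^ 2 + α₂ * (inner ℝ (u + v) v : ℝ) := by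
    rw [inner_add_left, real_inner_smul_left, real_inner_smul_left,
      ContinuousLinearMap.adjoint_inner_left, real_inner_self_eq_norm_sq, ← hv]
  rw [e1, e2]
  have eu : (inner ℝ (u + v) u : ℝ) = ‖u‖ ^ 2 + (inner ℝ u v : ℝ) := by
    rw [inner_add_left, real_inner_self_eq_norm_sq, real_inner_comm v u]
  have ev : (inner ℝ (u + v) v : ℝ) = (inner ℝ u v : ℝ) + ‖v‖ ^ 2 := by
    rw [inner_add_left, real_inner_self_eq_norm_sq]
  have hub : ‖u‖ ≤ ‖Λ₁‖ * ‖h₁‖ := Λ₁.le_opNorm h₁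
  have hvb : ‖v‖ ≤ ‖Λ₂‖ * ‖h₂‖ := Λ₂.le_opNorm h₂
  have huv : |(inner ℝ u v : ℝ)| ≤ ‖u‖ * ‖v‖ := abs_real_inner_le_norm u v
  have huv' : -(‖u‖ * ‖v‖) ≤ (inner ℝ u v : ℝ) := neg_le_of_abs_le huv
  have hun : (0:ℝ) ≤ ‖u‖ := norm_nonneg u
  have hvn : (0:ℝ) ≤ ‖v‖ := norm_nonneg v
  have huv'' : -(‖v‖ * ‖u‖) ≤ (inner ℝ u v : ℝ) := by rw [mul_comm]; exact huv'
  have hA : -(α₁ * (‖Λ₂‖ * ‖h₂‖) ^ 2 / 4) ≤ α₁ * (inner ℝ (u + v) u : ℝ) := by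
    rw [eu]; exact key_est α₁ ‖u‖ ‖v‖ (‖Λ₂‖ * ‖h₂‖) _ hα₁.le hun hvn hvb huv'
  have hB : -(α₂ * (‖Λ₁‖ * ‖h₁‖) ^ 2 / 4) ≤ α₂ * (inner ℝ (u + v) v : ℝ) := by
    rw [ev, add_comm]; exact key_est α₂ ‖v‖ ‖u‖ (‖Λ₁‖ * ‖h₁‖) _ hα₂.le hvn hun hub huv''
  have hm1 : min (μ₁ * ρ₀ ^ 2 - α₂ / 4 * ‖Λ₁‖ ^ 2) (μ₂ * ρ₀ ^ 2 - α₁ / 4 * ‖Λ₂‖ ^ 2)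
      ≤ μ₁ * ρ₀ ^ 2 - α₂ / 4 * ‖Λ₁‖ ^ 2 := min_le_left _ _
  have hm2 : min (μ₁ * ρ₀ ^ 2 - α₂ / 4 * ‖Λ₁‖ ^ 2) (μ₂ * ρ₀ ^ 2 - α₁ / 4 * ‖Λ₂‖ ^ 2)
      ≤ μ₂ * ρ₀ ^ 2 - α₁ / 4 * ‖Λ₂‖ ^ 2 := min_le_right _ _
  have t1 := mul_le_mul_of_nonneg_right hm1 (sq_nonneg ‖h₁‖)
  have t2 := mul_le_mul_of_nonneg_right hm2 (sq_nonneg ‖h₂‖)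
  calc min (μ₁ * ρ₀ ^ 2 - α₂ / 4 * ‖Λ₁‖ ^ 2) (μ₂ * ρ₀ ^ 2 - α₁ / 4 * ‖Λ₂‖ ^ 2)
        * (‖h₁‖ ^ 2 + ‖h₂‖ ^ 2)
      = min (μ₁ * ρ₀ ^ 2 - α₂ / 4 * ‖Λ₁‖ ^ 2) (μ₂ * ρ₀ ^ 2 - α₁ / 4 * ‖Λ₂‖ ^ 2) * ‖h₁‖ ^ 2
        + min (μ₁ * ρ₀ ^ 2 - α₂ / 4 * ‖Λ₁‖ ^ 2) (μ₂ * ρ₀ ^ 2 - α₁ / 4 * ‖Λ₂‖ ^ 2) * ‖h₂‖ ^ 2 := by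
        ring
    _ ≤ (μ₁ * ρ₀ ^ 2 - α₂ / 4 * ‖Λ₁‖ ^ 2) * ‖h₁‖ ^ 2
        + (μ₂ * ρ₀ ^ 2 - α₁ / 4 * ‖Λ₂‖ ^ 2) * ‖h₂‖ ^ 2 := add_le_add t1 t2
    _ ≤ _ := by linarith [hA, hB]
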